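/- For all i ≥ 3 and m ∈ {1,2,3}, the chromatic index of H^{-i,2}_{m,1} equals i. -/

import Mathlib

/-- The integral sum graph on vertex set `{r, ..., s} ⊆ ℤ`:
distinct `u, v` are adjacent iff `u + v` also lies in `{r, ..., s}`. -/
def intervalSumGraph (r s : ℤ) : SimpleGraph ℤ where
  Adj u v := u ≠ v ∧ u ∈ Set.Icc r s ∧ v ∈ Set.Icc r s ∧ u + v ∈ Set.Icc r s
  symm := by
    constructor
    rintro u v ⟨h1, h2, h3, h4⟩
    exact ⟨h1.symm, h3, h2, by rwa [add_comm]⟩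
  loopless := ⟨fun u h => h.1 rfl⟩

/-- The graph `H^{-i,s}_{m,j}`: obtained from the integral sum graph `G_{-i,s}`
by deleting the vertices `-m` and `j` and all edges whose endpoint labels sum
to `-m` or to `j`. -/
def HGraph (i s m j : ℤ) : SimpleGraph ℤ where
  Adj u v := u ≠ v ∧ u ∈ Set.Icc (-i) s ∧ v ∈ Set.Icc (-i) s ∧ u + v ∈ Set.Icc (-i) s ∧
    u ≠ -m ∧ v ≠ -m ∧ u ≠ j ∧ v ≠ j ∧ u + v ≠ -m ∧ u + v ≠ j
  symm := by
    constructor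
    rintro u v ⟨h1, h2, h3, h4, h5, h6, h7, h8, h9, h10⟩
    exact ⟨h1.symm, h3, h2, by rwa [add_comm], h6, h5, h8, h7,
      by rwa [add_comm], by rwa [add_comm]⟩
  loopless := ⟨fun u h => h.1 rfl⟩

/-- The chromatic index of a graph: the least `n` such that there is a proper
edge coloring with `n` colors (distinct edges sharing a vertex get distinct colors). -/
noncomputable def chromaticIndex {V : Type*} (G : SimpleGraph V) : ℕ :=
  sInf {n : ℕ | ∃ c : Sym2 V → Fin n,
    ∀ e ∈ G.edgeSet, ∀ f ∈ G.edgeSet, e ≠ f → (∃ v, v ∈ e ∧ v ∈ f) → c e ≠ c f}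

/-- The sum of the two endpoint labels of an edge. -/
def edgeSum (e : Sym2 ℤ) : ℤ := Sym2.lift ⟨fun a b => a + b, fun a b => add_comm a b⟩ e

/-- The edge-sum chromatic number: the number of nonempty edge-sum color classes. -/
noncomputable def edgeSumChromatic (G : SimpleGraph ℤ) : ℕ :=
  {k : ℤ | ∃ e ∈ G.edgeSet, edgeSum e = k}.ncard


def gcol (i m a b : ℤ) : ℤ :=
  if a = -1 ∧ b = 0 then i - 1
  else if a = 0 ∧ b = 2 then (if m = 1 then i - 1 else if m = 2 then i - 3 else i - 2)
  else if a = -2 ∧ b = 2 ∧ i = 3 ∧ m = 3 then i - 1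
  else if a = -2 ∧ b = 2 ∧ i = 4 ∧ m = 1 then i - 2
  else if m ≠ 2 ∧ a = 3 - i ∧ b = -2 ∧ a < b then i - 1
  else if m = 2 ∧ b ≤ -1 ∧ ((a = 3 - i ∧ b = -3) ∨ (a = -3 ∧ b = 3 - i)) then i - 3
  else if -3 ≤ a + b then
    (if i - (a + b) - 5 < 0 then 2 * i - (a + b) - 5 else i - (a + b) - 5)
  else -(a + b) - 4

def Dspec (i m a b g : ℤ) : Prop :=
  ((a = -1 ∧ b = 0) ∧ g = i-1) ∨
  (¬(a = -1 ∧ b = 0) ∧ (a = 0 ∧ b = 2) ∧ m = 1 ∧ g = i-1) ∨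
  (¬(a = -1 ∧ b = 0) ∧ (a = 0 ∧ b = 2) ∧ m ≠ 1 ∧ m = 2 ∧ g = i-3) ∨
  (¬(a = -1 ∧ b = 0) ∧ (a = 0 ∧ b = 2) ∧ m ≠ 1 ∧ m ≠ 2 ∧ g = i-2) ∨
  (¬(a = -1 ∧ b = 0) ∧ ¬(a = 0 ∧ b = 2) ∧ (a = -2 ∧ b = 2 ∧ i = 3 ∧ m = 3) ∧ g = i-1) ∨
  (¬(a = -1 ∧ b = 0) ∧ ¬(a = 0 ∧ b = 2) ∧ ¬(a = -2 ∧ b = 2 ∧ i = 3 ∧ m = 3) ∧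
    (a = -2 ∧ b = 2 ∧ i = 4 ∧ m = 1) ∧ g = i-2) ∨
  (¬(a = -1 ∧ b = 0) ∧ ¬(a = 0 ∧ b = 2) ∧ ¬(a = -2 ∧ b = 2 ∧ i = 3 ∧ m = 3) ∧
    ¬(a = -2 ∧ b = 2 ∧ i = 4 ∧ m = 1) ∧ (m ≠ 2 ∧ a = 3 - i ∧ b = -2 ∧ a < b) ∧ g = i-1) ∨
  (¬(a = -1 ∧ b = 0) ∧ ¬(a = 0 ∧ b = 2) ∧ ¬(a = -2 ∧ b = 2 ∧ i = 3 ∧ m = 3) ∧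
    ¬(a = -2 ∧ b = 2 ∧ i = 4 ∧ m = 1) ∧ ¬(m ≠ 2 ∧ a = 3 - i ∧ b = -2 ∧ a < b) ∧
    (m = 2 ∧ b ≤ -1 ∧ ((a = 3 - i ∧ b = -3) ∨ (a = -3 ∧ b = 3 - i))) ∧ g = i-3) ∨
  (¬(a = -1 ∧ b = 0) ∧ ¬(a = 0 ∧ b = 2) ∧ ¬(a = -2 ∧ b = 2 ∧ i = 3 ∧ m = 3) ∧
    ¬(a = -2 ∧ b = 2 ∧ i = 4 ∧ m = 1) ∧ ¬(m ≠ 2 ∧ a = 3 - i ∧ b = -2 ∧ a < b) ∧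
    ¬(m = 2 ∧ b ≤ -1 ∧ ((a = 3 - i ∧ b = -3) ∨ (a = -3 ∧ b = 3 - i))) ∧
    -3 ≤ a + b ∧ i - (a+b) - 5 < 0 ∧ g = 2*i - (a+b) - 5) ∨
  (¬(a = -1 ∧ b = 0) ∧ ¬(a = 0 ∧ b = 2) ∧ ¬(a = -2 ∧ b = 2 ∧ i = 3 ∧ m = 3) ∧
    ¬(a = -2 ∧ b = 2 ∧ i = 4 ∧ m = 1) ∧ ¬(m ≠ 2 ∧ a = 3 - i ∧ b = -2 ∧ a < b) ∧
    ¬(m = 2 ∧ b ≤ -1 ∧ ((a = 3 - i ∧ b = -3) ∨ (a = -3 ∧ b = 3 - i))) ∧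
    -3 ≤ a + b ∧ ¬(i - (a+b) - 5 < 0) ∧ g = i - (a+b) - 5) ∨
  (¬(a = -1 ∧ b = 0) ∧ ¬(a = 0 ∧ b = 2) ∧ ¬(a = -2 ∧ b = 2 ∧ i = 3 ∧ m = 3) ∧
    ¬(a = -2 ∧ b = 2 ∧ i = 4 ∧ m = 1) ∧ ¬(m ≠ 2 ∧ a = 3 - i ∧ b = -2 ∧ a < b) ∧
    ¬(m = 2 ∧ b ≤ -1 ∧ ((a = 3 - i ∧ b = -3) ∨ (a = -3 ∧ b = 3 - i))) ∧
    ¬(-3 ≤ a + b) ∧ g = -(a+b) - 4)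

lemma gcol_spec (i m a b : ℤ) : Dspec i m a b (gcol i m a b) := by
  unfold gcol
  by_cases h1 : a = -1 ∧ b = 0
  · rw [if_pos h1]; exact Or.inl ⟨h1, rfl⟩
  rw [if_neg h1]
  by_cases h2 : a = 0 ∧ b = 2
  · rw [if_pos h2]
    by_cases hm1 : m = 1
    · rw [if_pos hm1]; exact Or.inr (Or.inl ⟨h1, h2, hm1, rfl⟩)
    rw [if_neg hm1]
    by_cases hm2 : m = 2
    · rw [if_pos hm2]; exact Or.inr (Or.inr (Or.inl ⟨h1, h2, hm1, hm2, rfl⟩))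
    · rw [if_neg hm2]; exact Or.inr (Or.inr (Or.inr (Or.inl ⟨h1, h2, hm1, hm2, rfl⟩)))
  rw [if_neg h2]
  by_cases h3 : a = -2 ∧ b = 2 ∧ i = 3 ∧ m = 3
  · rw [if_pos h3]
    exact Or.inr (Or.inr (Or.inr (Or.inr (Or.inl ⟨h1, h2, h3, rfl⟩))))
  rw [if_neg h3]
  by_cases h4 : a = -2 ∧ b = 2 ∧ i = 4 ∧ m = 1
  · rw [if_pos h4]
    exact Or.inr (Or.inr (Or.inr (Or.inr (Or.inr (Or.inl ⟨h1, h2, h3, h4, rfl⟩)))))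
  rw [if_neg h4]
  by_cases h5 : m ≠ 2 ∧ a = 3 - i ∧ b = -2 ∧ a < b
  · rw [if_pos h5]
    exact Or.inr (Or.inr (Or.inr (Or.inr (Or.inr (Or.inr (Or.inl ⟨h1, h2, h3, h4, h5, rfl⟩))))))
  rw [if_neg h5]
  by_cases h6 : m = 2 ∧ b ≤ -1 ∧ ((a = 3 - i ∧ b = -3) ∨ (a = -3 ∧ b = 3 - i))
  · rw [if_pos h6]
    exact Or.inr (Or.inr (Or.inr (Or.inr (Or.inr (Or.inr (Or.inr (Or.inl
      ⟨h1, h2, h3, h4, h5, h6, rfl⟩)))))))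
  rw [if_neg h6]
  by_cases h7 : -3 ≤ a + b
  · rw [if_pos h7]
    by_cases h8 : i - (a + b) - 5 < 0
    · rw [if_pos h8]
      exact Or.inr (Or.inr (Or.inr (Or.inr (Or.inr (Or.inr (Or.inr (Or.inr (Or.inl
        ⟨h1, h2, h3, h4, h5, h6, h7, h8, rfl⟩))))))))
    · rw [if_neg h8]
      exact Or.inr (Or.inr (Or.inr (Or.inr (Or.inr (Or.inr (Or.inr (Or.inr (Or.inr (Or.inl
        ⟨h1, h2, h3, h4, h5, h6, h7, h8, rfl⟩)))))))))
  · rw [if_neg h7]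
    exact Or.inr (Or.inr (Or.inr (Or.inr (Or.inr (Or.inr (Or.inr (Or.inr (Or.inr (Or.inr
      ⟨h1, h2, h3, h4, h5, h6, h7, rfl⟩)))))))))


def Pspec (i m a b g : ℤ) : Prop :=
  (a = -1 ∧ b = 0 ∧ g = i-1) ∨
  (-3 ≤ a ∧ a ≤ -2 ∧ b = 0 ∧ g = i-a-5) ∨
  (a ≤ -4 ∧ b = 0 ∧ g = -a-4) ∨
  (a = 0 ∧ b = 2 ∧ m = 1 ∧ g = i-1) ∨
  (a = 0 ∧ b = 2 ∧ m = 2 ∧ g = i-3) ∨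
  (a = 0 ∧ b = 2 ∧ m = 3 ∧ g = i-2) ∨
  (a = -2 ∧ b = 2 ∧ i = 3 ∧ m = 3 ∧ g = i-1) ∨
  (a = -2 ∧ b = 2 ∧ i = 4 ∧ m = 1 ∧ g = i-2) ∨
  (a = -2 ∧ b = 2 ∧ i = 3 ∧ m ≤ 2 ∧ g = 2*i-5) ∨
  (a = -2 ∧ b = 2 ∧ i = 4 ∧ 2 ≤ m ∧ g = 2*i-5) ∨
  (a = -2 ∧ b = 2 ∧ 5 ≤ i ∧ g = i-5) ∨
  (a = -3 ∧ b = 2 ∧ i = 3 ∧ g = 2*i-a-7) ∨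
  (a = -3 ∧ b = 2 ∧ 4 ≤ i ∧ g = i-a-7) ∨
  (-5 ≤ a ∧ a ≤ -4 ∧ b = 2 ∧ g = i-a-7) ∨
  (a ≤ -6 ∧ b = 2 ∧ g = -a-6) ∨
  (m ≠ 2 ∧ b = -2 ∧ a = 3-i ∧ a ≤ -3 ∧ g = i-1) ∨
  (m ≠ 2 ∧ b = -2 ∧ a = 2-i ∧ a ≤ -3 ∧ g = -(a+b)-4) ∨
  (m ≠ 2 ∧ b = -2 ∧ 4-i ≤ a ∧ a ≤ -3 ∧ g = -(a+b)-4) ∨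
  (m ≠ 2 ∧ b = -1 ∧ g = -(a+b)-4) ∨
  (m ≠ 2 ∧ b ≤ -3 ∧ g = -(a+b)-4) ∨
  (m = 2 ∧ b = -1 ∧ i = 4 ∧ a = -3 ∧ g = i-3) ∨
  (m = 2 ∧ b = -1 ∧ 5 ≤ i ∧ g = -(a+b)-4) ∨
  (m = 2 ∧ b = -3 ∧ a = 3-i ∧ a ≤ -4 ∧ g = i-3) ∨
  (m = 2 ∧ b = -3 ∧ 4-i ≤ a ∧ g = -(a+b)-4) ∨
  (m = 2 ∧ b ≤ -4 ∧ g = -(a+b)-4)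

set_option maxHeartbeats 1000000 in
lemma gcol_spec2 (i m a b : ℤ) (hi : 3 ≤ i) (hm : m = 1 ∨ m = 2 ∨ m = 3)
    (h1 : a < b) (h2 : -i ≤ a) (h3 : b ≤ 2)
    (h6 : -i ≤ a + b) (h7 : a + b ≤ 2) (h8 : a ≠ -m) (h9 : b ≠ -m)
    (h10 : a ≠ 1) (h11 : b ≠ 1) (h12 : a + b ≠ -m) (h13 : a + b ≠ 1) :
    Pspec i m a b (gcol i m a b) := by
  have h := gcol_spec i m a b
  simp only [Dspec] at h
  simp only [Pspec]
  rcases h with h|h|h|h|h|h|h|h|h|h|h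
  · obtain ⟨hc, hg⟩ := h
    exact Or.inl (by omega)
  · obtain ⟨-, hc, hm1, hg⟩ := h
    exact Or.inr (Or.inr (Or.inr (Or.inl (by omega))))
  · obtain ⟨-, hc, -, hm2, hg⟩ := h
    exact Or.inr (Or.inr (Or.inr (Or.inr (Or.inl (by omega)))))
  · obtain ⟨-, hc, hm1, hm2, hg⟩ := h
    exact Or.inr (Or.inr (Or.inr (Or.inr (Or.inr (Or.inl (by omega))))))
  · obtain ⟨-, -, hc, hg⟩ := h
    exact Or.inr (Or.inr (Or.inr (Or.inr (Or.inr (Or.inr (Or.inl (by omega)))))))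
  · obtain ⟨-, -, -, hc, hg⟩ := h
    exact Or.inr (Or.inr (Or.inr (Or.inr (Or.inr (Or.inr (Or.inr (Or.inl (by omega))))))))
  · obtain ⟨-, -, -, -, hc, hg⟩ := h
    exact Or.inr (Or.inr (Or.inr (Or.inr (Or.inr (Or.inr (Or.inr (Or.inr (Or.inr (Or.inr (Or.inr (Or.inr (Or.inr (Or.inr (Or.inr (Or.inl (by omega))))))))))))))))
  · obtain ⟨-, -, -, -, -, ⟨hm2, hb1, hXY⟩, hg⟩ := h
    rcases hXY with hX | hY
    · exact Or.inr (Or.inr (Or.inr (Or.inr (Or.inr (Or.inr (Or.inr (Or.inr (Or.inr (Or.inr (Or.inr (Or.inr (Or.inr (Or.inr (Or.inr (Or.inr (Or.inr (Or.inr (Or.inr (Or.inr (Or.inr (Or.inr (Or.inl (by omega)))))))))))))))))))))))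
    · exact Or.inr (Or.inr (Or.inr (Or.inr (Or.inr (Or.inr (Or.inr (Or.inr (Or.inr (Or.inr (Or.inr (Or.inr (Or.inr (Or.inr (Or.inr (Or.inr (Or.inr (Or.inr (Or.inr (Or.inr (Or.inl (by omega)))))))))))))))))))))
  · obtain ⟨n1, n2, n3, n4, -, -, hs3, ht, hg⟩ := h
    rcases (show b = 2 ∨ b = 0 ∨ b = -1 ∨ b = -2 ∨ b = -3 ∨ b ≤ -4 by omega) with hb|hb|hb|hb|hb|hb
    · rcases (show a = 0 ∨ a = -1 ∨ a = -2 ∨ a = -3 ∨ a ≤ -4 by omega) with ha|ha|ha|ha|ha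
      · exfalso; clear n1 n3 n4; omega
      · exfalso; clear n1 n2 n3 n4; omega
      · rcases (show i = 3 ∨ i = 4 by omega) with hi4|hi4
        · clear n1 n2 n4; exact Or.inr (Or.inr (Or.inr (Or.inr (Or.inr (Or.inr (Or.inr (Or.inr (Or.inl (by omega)))))))))
        · clear n1 n2 n3; exact Or.inr (Or.inr (Or.inr (Or.inr (Or.inr (Or.inr (Or.inr (Or.inr (Or.inr (Or.inl (by omega))))))))))
      · clear n1 n2 n3 n4; exact Or.inr (Or.inr (Or.inr (Or.inr (Or.inr (Or.inr (Or.inr (Or.inr (Or.inr (Or.inr (Or.inr (Or.inl (by omega))))))))))))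
      · exfalso; clear n1 n2 n3 n4; omega
    · exfalso; clear n2 n3 n4; omega
    · exfalso; clear n1 n2 n3 n4; omega
    · exfalso; clear n1 n2 n3 n4; omega
    · exfalso; clear n1 n2 n3 n4; omega
    · exfalso; clear n1 n2 n3 n4; omega
  · obtain ⟨n1, n2, -, -, -, -, hs3, ht, hg⟩ := h
    rcases (show b = 2 ∨ b = 0 ∨ b = -1 ∨ b = -2 ∨ b = -3 ∨ b ≤ -4 by omega) with hb|hb|hb|hb|hb|hb
    · rcases (show a = 0 ∨ a = -1 ∨ a = -2 ∨ a = -3 ∨ a = -4 ∨ a = -5 ∨ a ≤ -6 by omega) with ha|ha|ha|ha|ha|ha|ha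
      · exfalso; clear n1; omega
      · exfalso; clear n1 n2; omega
      · clear n1 n2; exact Or.inr (Or.inr (Or.inr (Or.inr (Or.inr (Or.inr (Or.inr (Or.inr (Or.inr (Or.inr (Or.inl (by omega)))))))))))
      · clear n1 n2; exact Or.inr (Or.inr (Or.inr (Or.inr (Or.inr (Or.inr (Or.inr (Or.inr (Or.inr (Or.inr (Or.inr (Or.inr (Or.inl (by omega)))))))))))))
      · clear n1 n2; exact Or.inr (Or.inr (Or.inr (Or.inr (Or.inr (Or.inr (Or.inr (Or.inr (Or.inr (Or.inr (Or.inr (Or.inr (Or.inr (Or.inl (by omega))))))))))))))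
      · clear n1 n2; exact Or.inr (Or.inr (Or.inr (Or.inr (Or.inr (Or.inr (Or.inr (Or.inr (Or.inr (Or.inr (Or.inr (Or.inr (Or.inr (Or.inl (by omega))))))))))))))
      · exfalso; clear n1 n2; omega
    · clear n2; exact Or.inr (Or.inl (by omega))
    · exfalso; clear n1 n2; omega
    · exfalso; clear n1 n2; omega
    · exfalso; clear n1 n2; omega
    · exfalso; clear n1 n2; omega
  · obtain ⟨-, -, -, -, n5, n6, hs3, hg⟩ := h
    rcases (show b = 2 ∨ b = 0 ∨ b = -1 ∨ b = -2 ∨ b = -3 ∨ b ≤ -4 by omega) with hb|hb|hb|hb|hb|hb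
    · clear n5 n6; exact Or.inr (Or.inr (Or.inr (Or.inr (Or.inr (Or.inr (Or.inr (Or.inr (Or.inr (Or.inr (Or.inr (Or.inr (Or.inr (Or.inr (Or.inl (by omega)))))))))))))))
    · clear n5 n6; exact Or.inr (Or.inr (Or.inl (by omega)))
    · rcases hm with hm'|hm'|hm'
      · clear n5 n6; exact Or.inr (Or.inr (Or.inr (Or.inr (Or.inr (Or.inr (Or.inr (Or.inr (Or.inr (Or.inr (Or.inr (Or.inr (Or.inr (Or.inr (Or.inr (Or.inr (Or.inr (Or.inr (Or.inl (by omega)))))))))))))))))))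
      · clear n5; exact Or.inr (Or.inr (Or.inr (Or.inr (Or.inr (Or.inr (Or.inr (Or.inr (Or.inr (Or.inr (Or.inr (Or.inr (Or.inr (Or.inr (Or.inr (Or.inr (Or.inr (Or.inr (Or.inr (Or.inr (Or.inr (Or.inl (by omega))))))))))))))))))))))
      · clear n5 n6; exact Or.inr (Or.inr (Or.inr (Or.inr (Or.inr (Or.inr (Or.inr (Or.inr (Or.inr (Or.inr (Or.inr (Or.inr (Or.inr (Or.inr (Or.inr (Or.inr (Or.inr (Or.inr (Or.inl (by omega)))))))))))))))))))
    · rcases (show a = 2-i ∨ 4-i ≤ a by (clear n6; omega)) with ha|ha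
      · clear n5 n6; exact Or.inr (Or.inr (Or.inr (Or.inr (Or.inr (Or.inr (Or.inr (Or.inr (Or.inr (Or.inr (Or.inr (Or.inr (Or.inr (Or.inr (Or.inr (Or.inr (Or.inl (by omega)))))))))))))))))
      · clear n5 n6; exact Or.inr (Or.inr (Or.inr (Or.inr (Or.inr (Or.inr (Or.inr (Or.inr (Or.inr (Or.inr (Or.inr (Or.inr (Or.inr (Or.inr (Or.inr (Or.inr (Or.inr (Or.inl (by omega))))))))))))))))))
    · rcases hm with hm'|hm'|hm'
      · clear n5 n6; exact Or.inr (Or.inr (Or.inr (Or.inr (Or.inr (Or.inr (Or.inr (Or.inr (Or.inr (Or.inr (Or.inr (Or.inr (Or.inr (Or.inr (Or.inr (Or.inr (Or.inr (Or.inr (Or.inr (Or.inl (by omega))))))))))))))))))))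
      · rcases (show a = 3-i ∨ 4-i ≤ a by omega) with ha|ha
        · exfalso; clear n5; omega
        · clear n5 n6; exact Or.inr (Or.inr (Or.inr (Or.inr (Or.inr (Or.inr (Or.inr (Or.inr (Or.inr (Or.inr (Or.inr (Or.inr (Or.inr (Or.inr (Or.inr (Or.inr (Or.inr (Or.inr (Or.inr (Or.inr (Or.inr (Or.inr (Or.inr (Or.inl (by omega))))))))))))))))))))))))
      · clear n5 n6; exact Or.inr (Or.inr (Or.inr (Or.inr (Or.inr (Or.inr (Or.inr (Or.inr (Or.inr (Or.inr (Or.inr (Or.inr (Or.inr (Or.inr (Or.inr (Or.inr (Or.inr (Or.inr (Or.inr (Or.inl (by omega))))))))))))))))))))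
    · rcases hm with hm'|hm'|hm'
      · clear n5 n6; exact Or.inr (Or.inr (Or.inr (Or.inr (Or.inr (Or.inr (Or.inr (Or.inr (Or.inr (Or.inr (Or.inr (Or.inr (Or.inr (Or.inr (Or.inr (Or.inr (Or.inr (Or.inr (Or.inr (Or.inl (by omega))))))))))))))))))))
      · clear n5 n6; exact Or.inr (Or.inr (Or.inr (Or.inr (Or.inr (Or.inr (Or.inr (Or.inr (Or.inr (Or.inr (Or.inr (Or.inr (Or.inr (Or.inr (Or.inr (Or.inr (Or.inr (Or.inr (Or.inr (Or.inr (Or.inr (Or.inr (Or.inr (Or.inr (by omega))))))))))))))))))))))))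
      · clear n5 n6; exact Or.inr (Or.inr (Or.inr (Or.inr (Or.inr (Or.inr (Or.inr (Or.inr (Or.inr (Or.inr (Or.inr (Or.inr (Or.inr (Or.inr (Or.inr (Or.inr (Or.inr (Or.inr (Or.inr (Or.inl (by omega))))))))))))))))))))

set_option maxHeartbeats 1000000 in
lemma gcol_ne (i m u v w : ℤ) (hi : 3 ≤ i) (hm : m = 1 ∨ m = 2 ∨ m = 3)
    (hvw : v ≠ w)
    (e1 : u < v) (e2 : -i ≤ u) (e3 : v ≤ 2) (e4 : -i ≤ v) (e5 : u ≤ 2)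
    (e6 : -i ≤ u + v) (e7 : u + v ≤ 2) (e8 : u ≠ -m) (e9 : v ≠ -m)
    (e10 : u ≠ 1) (e11 : v ≠ 1) (e12 : u + v ≠ -m) (e13 : u + v ≠ 1)
    (f1 : u < w) (f4 : -i ≤ w) (f5 : w ≤ 2)
    (f6 : -i ≤ u + w) (f7 : u + w ≤ 2) (f9 : w ≠ -m)
    (f11 : w ≠ 1) (f12 : u + w ≠ -m) (f13 : u + w ≠ 1) :
    gcol i m u v ≠ gcol i m u w := by
  have hs1 := gcol_spec2 i m u v hi hm e1 e2 e3 e6 e7 e8 e9 e10 e11 e12 e13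
  have hs2 := gcol_spec2 i m u w hi hm f1 e2 f5 f6 f7 e8 f9 e10 f11 f12 f13
  simp only [Pspec] at hs1 hs2
  omega

set_option maxHeartbeats 1000000 in
lemma gcol_ne2 (i m u v w : ℤ) (hi : 3 ≤ i) (hm : m = 1 ∨ m = 2 ∨ m = 3)
    (e1 : u < v) (e2 : -i ≤ u) (e3 : v ≤ 2)
    (e6 : -i ≤ u + v) (e7 : u + v ≤ 2) (e8 : u ≠ -m) (e9 : v ≠ -m)
    (e10 : u ≠ 1) (e11 : v ≠ 1) (e12 : u + v ≠ -m) (e13 : u + v ≠ 1)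
    (f1 : w < u) (f4 : -i ≤ w) (f5 : u ≤ 2)
    (f6 : -i ≤ w + u) (f7 : w + u ≤ 2) (f9 : w ≠ -m)
    (f11 : w ≠ 1) (f12 : w + u ≠ -m) (f13 : w + u ≠ 1) :
    gcol i m u v ≠ gcol i m w u := by
  have hs1 := gcol_spec2 i m u v hi hm e1 e2 e3 e6 e7 e8 e9 e10 e11 e12 e13
  have hs2 := gcol_spec2 i m w u hi hm f1 f4 f5 f6 f7 f9 e8 f11 e10 f12 f13
  simp only [Pspec] at hs1 hs2
  omega

set_option maxHeartbeats 1000000 in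
lemma gcol_ne3 (i m u v w : ℤ) (hi : 3 ≤ i) (hm : m = 1 ∨ m = 2 ∨ m = 3)
    (hvw : v ≠ w)
    (e1 : v < u) (e2 : -i ≤ v) (e3 : u ≤ 2)
    (e6 : -i ≤ v + u) (e7 : v + u ≤ 2) (e8 : v ≠ -m) (e9 : u ≠ -m)
    (e10 : v ≠ 1) (e11 : u ≠ 1) (e12 : v + u ≠ -m) (e13 : v + u ≠ 1)
    (f1 : w < u) (f4 : -i ≤ w)
    (f6 : -i ≤ w + u) (f7 : w + u ≤ 2) (f9 : w ≠ -m)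
    (f11 : w ≠ 1) (f12 : w + u ≠ -m) (f13 : w + u ≠ 1) :
    gcol i m v u ≠ gcol i m w u := by
  have hs1 := gcol_spec2 i m v u hi hm e1 e2 e3 e6 e7 e8 e9 e10 e11 e12 e13
  have hs2 := gcol_spec2 i m w u hi hm f1 f4 e3 f6 f7 f9 e9 f11 e11 f12 f13
  simp only [Pspec] at hs1 hs2
  omega

def fcol (i m u v : ℤ) : ℤ := gcol i m (min u v) (max u v)

lemma fcol_comm (i m u v : ℤ) : fcol i m u v = fcol i m v u := by
  unfold fcol; rw [min_comm, max_comm]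

lemma HGraph_adj {i m u v : ℤ} (h : (HGraph i 2 m 1).Adj u v) :
    u ≠ v ∧ (-i ≤ u ∧ u ≤ 2) ∧ (-i ≤ v ∧ v ≤ 2) ∧ (-i ≤ u + v ∧ u + v ≤ 2) ∧
    u ≠ -m ∧ v ≠ -m ∧ u ≠ 1 ∧ v ≠ 1 ∧ u + v ≠ -m ∧ u + v ≠ 1 := by
  obtain ⟨h1, h2, h3, h4, h5, h6, h7, h8, h9, h10⟩ := h
  rw [Set.mem_Icc] at h2 h3 h4
  exact ⟨h1, h2, h3, h4, h5, h6, h7, h8, h9, h10⟩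

lemma fcol_ne (i m u v w : ℤ) (hi : 3 ≤ i) (hm : m = 1 ∨ m = 2 ∨ m = 3)
    (hvw : v ≠ w) (he : (HGraph i 2 m 1).Adj u v) (hf : (HGraph i 2 m 1).Adj u w) :
    fcol i m u v ≠ fcol i m u w := by
  obtain ⟨e1, ⟨e2, e3⟩, ⟨e4, e5⟩, ⟨e6, e7⟩, e8, e9, e10, e11, e12, e13⟩ := HGraph_adj he
  obtain ⟨f1, -, ⟨f4, f5⟩, ⟨f6, f7⟩, -, f9, -, f11, f12, f13⟩ := HGraph_adj hf
  unfold fcol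
  rcases lt_or_gt_of_ne e1 with h | h <;> rcases lt_or_gt_of_ne f1 with h' | h'
  · rw [min_eq_left h.le, max_eq_right h.le, min_eq_left h'.le, max_eq_right h'.le]
    exact gcol_ne i m u v w hi hm hvw h e2 e5 e4 e3 e6 e7 e8 e9 e10 e11 e12 e13
      h' f4 f5 f6 f7 f9 f11 f12 f13
  · rw [min_eq_left h.le, max_eq_right h.le, min_eq_right h'.le, max_eq_left h'.le]
    exact gcol_ne2 i m u v w hi hm h e2 e5 e6 e7 e8 e9 e10 e11 e12 e13
      h' f4 e3 (by omega) (by omega) f9 f11 (by omega) (by omega)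
  · rw [min_eq_right h.le, max_eq_left h.le, min_eq_left h'.le, max_eq_right h'.le]
    exact (gcol_ne2 i m u w v hi hm h' e2 f5 f6 f7 e8 f9 e10 f11 f12 f13
      h e4 e3 (by omega) (by omega) e9 e11 (by omega) (by omega)).symm
  · rw [min_eq_right h.le, max_eq_left h.le, min_eq_right h'.le, max_eq_left h'.le]
    exact gcol_ne3 i m u v w hi hm hvw h e4 e3 (by omega) (by omega) e9 e8 e11 e10
      (by omega) (by omega) h' f4 (by omega) (by omega) f9 f11 (by omega) (by omega)

set_option maxHeartbeats 800000 in
lemma fcol_range (i m u v : ℤ) (hi : 3 ≤ i) (hm : m = 1 ∨ m = 2 ∨ m = 3)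
    (he : (HGraph i 2 m 1).Adj u v) :
    0 ≤ fcol i m u v ∧ fcol i m u v < i := by
  obtain ⟨e1, ⟨e2, e3⟩, ⟨e4, e5⟩, ⟨e6, e7⟩, e8, e9, e10, e11, e12, e13⟩ := HGraph_adj he
  unfold fcol
  rcases lt_or_gt_of_ne e1 with h | h
  · rw [min_eq_left h.le, max_eq_right h.le]
    have := gcol_spec2 i m u v hi hm h e2 e5 e6 e7 e8 e9 e10 e11 e12 e13
    simp only [Pspec] at this
    omega
  · rw [min_eq_right h.le, max_eq_left h.le]
    have := gcol_spec2 i m v u hi hm h e4 e3 (by omega) (by omega) e9 e8 e11 e10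
      (by omega) (by omega)
    simp only [Pspec] at this
    omega
theorem chromaticIndex_H_i_2_m_1 (i : ℕ) (hi : 3 ≤ i) (m : ℤ)
    (hm : m ∈ ({1, 2, 3} : Set ℤ)) :
    chromaticIndex (HGraph (i : ℤ) 2 m 1) = i := by
  have him : m = 1 ∨ m = 2 ∨ m = 3 := by simpa using hm
  have hiz : (3:ℤ) ≤ (i:ℤ) := by exact_mod_cast hi
  have hipos : 0 < i := by omega
  set S := {n : ℕ | ∃ c : Sym2 ℤ → Fin n,
    ∀ e ∈ (HGraph (i : ℤ) 2 m 1).edgeSet, ∀ f ∈ (HGraph (i : ℤ) 2 m 1).edgeSet,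
      e ≠ f → (∃ v, v ∈ e ∧ v ∈ f) → c e ≠ c f} with hS
  -- the explicit coloring
  have hmem : i ∈ S := by
    refine ⟨fun e => ⟨(Sym2.lift ⟨fun u v => fcol (i:ℤ) m u v,
      fun u v => fcol_comm (i:ℤ) m u v⟩ e).toNat % i, Nat.mod_lt _ hipos⟩, ?_⟩
    have key : ∀ p q r : ℤ, (HGraph (i:ℤ) 2 m 1).Adj p q → (HGraph (i:ℤ) 2 m 1).Adj p r →
        q ≠ r →
        (⟨(Sym2.lift ⟨fun u v => fcol (i:ℤ) m u v,
          fun u v => fcol_comm (i:ℤ) m u v⟩ s(p,q)).toNat % i, Nat.mod_lt _ hipos⟩ : Fin i) ≠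
        (⟨(Sym2.lift ⟨fun u v => fcol (i:ℤ) m u v,
          fun u v => fcol_comm (i:ℤ) m u v⟩ s(p,r)).toNat % i, Nat.mod_lt _ hipos⟩ : Fin i) := by
      intro p q r hpq hpr hqr
      have hr1 := fcol_range (i:ℤ) m p q hiz him hpq
      have hr2 := fcol_range (i:ℤ) m p r hiz him hpr
      have hne := fcol_ne (i:ℤ) m p q r hiz him hqr hpq hpr
      simp only [Sym2.lift_mk, Ne, Fin.mk.injEq]
      have m1 : (fcol (i:ℤ) m p q).toNat % i = (fcol (i:ℤ) m p q).toNat :=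
        Nat.mod_eq_of_lt (by omega)
      have m2 : (fcol (i:ℤ) m p r).toNat % i = (fcol (i:ℤ) m p r).toNat :=
        Nat.mod_eq_of_lt (by omega)
      rw [m1, m2]
      omega
    intro e he f hf
    revert he hf
    induction e, f using Sym2.inductionOn₂
    rename_i a b c d
    intro he hf hef hshare
    rw [SimpleGraph.mem_edgeSet] at he hf
    obtain ⟨x, hxe, hxf⟩ := hshare
    rw [Sym2.mem_iff] at hxe hxf
    rcases hxe with h1 | h1 <;> rcases hxf with h2 | h2
    · rw [← h1] at he hef ⊢
      rw [← h2] at hf hef ⊢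
      exact key x b d he hf (fun h => hef (by rw [h]))
    · rw [← h1] at he hef ⊢
      rw [← h2] at hf hef ⊢
      rw [Sym2.eq_swap (a := c) (b := x)]
      exact key x b c he hf.symm (fun h => hef (by rw [h, Sym2.eq_swap]))
    · rw [← h1] at he hef ⊢
      rw [← h2] at hf hef ⊢
      rw [Sym2.eq_swap (a := a) (b := x)]
      exact key x a d he.symm hf (fun h => hef (by rw [h, Sym2.eq_swap]))
    · rw [← h1] at he hef ⊢
      rw [← h2] at hf hef ⊢
      rw [Sym2.eq_swap (a := a) (b := x), Sym2.eq_swap (a := c) (b := x)]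
      exact key x a c he.symm hf.symm (fun h => hef (by rw [h]))
  -- lower bound
  have hlb : ∀ n ∈ S, i ≤ n := by
    intro n hn
    obtain ⟨c, hc⟩ := hn
    set T : Finset ℤ := (((Finset.Icc (-(i:ℤ)) 2).erase (-m)).erase 1).erase 0 with hT
    have hmm : -m ∈ Finset.Icc (-(i:ℤ)) 2 := by
      rw [Finset.mem_Icc]; omega
    have h1m : (1:ℤ) ∈ (Finset.Icc (-(i:ℤ)) 2).erase (-m) := by
      rw [Finset.mem_erase, Finset.mem_Icc]; omega
    have h0m : (0:ℤ) ∈ ((Finset.Icc (-(i:ℤ)) 2).erase (-m)).erase 1 := by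
      rw [Finset.mem_erase, Finset.mem_erase, Finset.mem_Icc]; omega
    have hTcard : T.card = i := by
      rw [hT, Finset.card_erase_of_mem h0m, Finset.card_erase_of_mem h1m,
        Finset.card_erase_of_mem hmm, Int.card_Icc]
      omega
    have hinj : Set.InjOn (fun v => c s(0, v)) T := by
      intro x hx y hy hEq
      simp only [hT, Finset.mem_coe, Finset.mem_erase, Finset.mem_Icc] at hx hy
      by_contra hxy
      have hadjx : (HGraph (i:ℤ) 2 m 1).Adj 0 x := by
        exact ⟨by omega, Set.mem_Icc.mpr (by omega), Set.mem_Icc.mpr (by omega),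
          Set.mem_Icc.mpr (by omega), by omega, by omega, by omega, by omega,
          by omega, by omega⟩
      have hadjy : (HGraph (i:ℤ) 2 m 1).Adj 0 y := by
        exact ⟨by omega, Set.mem_Icc.mpr (by omega), Set.mem_Icc.mpr (by omega),
          Set.mem_Icc.mpr (by omega), by omega, by omega, by omega, by omega,
          by omega, by omega⟩
      
      have hne : s(0, x) ≠ s(0, y) := by
        intro hE
        rcases Sym2.eq_iff.mp hE with ⟨-, h⟩ | ⟨h0, h0'⟩
        · exact hxy h
        · omega
      exact hc s(0,x) ((HGraph (i:ℤ) 2 m 1).mem_edgeSet.mpr hadjx)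
        s(0,y) ((HGraph (i:ℤ) 2 m 1).mem_edgeSet.mpr hadjy) hne ⟨0, by simp, by simp⟩ hEq
    have := Finset.card_le_card_of_injOn (fun v => c s(0, v))
      (fun a _ => Finset.mem_univ _) hinj
    rw [hTcard, Finset.card_univ, Fintype.card_fin] at this
    exact this
  exact le_antisymm (Nat.sInf_le hmem) (le_csInf ⟨i, hmem⟩ hlb)
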